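/- arXiv:0909.5473 — 3 statements merged into one kernel-verified Lean document; each statement's English description precedes it below -/
import Mathlib

section
/- For every a > 0, the inequality (1 − e^{−a})/a + (1/4)·(e^{−a} − e^{−2a})/a + (9/4)·(e^{−2a} − e^{−4a})/a ≤ 1/a holds. -/
theorem stmt2 (a : ℝ) (ha : 0 < a) :
    (1 - Real.exp (-a)) / a + (1 / 4) * (Real.exp (-a) - Real.exp (-2 * a)) / a +
      (9 / 4) * (Real.exp (-2 * a) - Real.exp (-4 * a)) / a ≤ 1 / a := by
  rw [← add_div, ← add_div, div_le_div_iff_of_pos_right ha]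
  set x := Real.exp (-a) with hx
  have hx0 : 0 < x := Real.exp_pos _
  have h2 : Real.exp (-2 * a) = x ^ 2 := by
    rw [hx, ← Real.exp_nat_mul]; ring_nf
  have h4 : Real.exp (-4 * a) = x ^ 4 := by
    rw [hx, ← Real.exp_nat_mul]; ring_nf
  rw [h2, h4]
  nlinarith [hx0, sq_nonneg (x - 27/50), mul_nonneg hx0.le (sq_nonneg (x - 27/50)), mul_nonneg (mul_nonneg hx0.le hx0.le) (sq_nonneg (x - 27/50)), sq_nonneg (x*(x-27/50))]
end

section
/- Let μ > 0 and consider the cylinder with radii r_1, r_2, r_3 and heights h_1, h_2, h_3 satisfying 0 < r_2 < r_1 < r_3, r_2^{d−1} + r_3^{d−1} ≤ 2·r_1^{d−1}, 0 ≥ h_1 > h_2 > h_3 and h_1 − h_2 ≥ h_2 − h_3. Then for every a > 0: r_1^{d−1}·∫_{h_1}^{0} e^{ay} dy + r_2^{d−1}·∫_{h_2}^{h_1} e^{ay} dy + r_3^{d−1}·∫_{h_3}^{h_2} e^{ay} dy ≤ r_1^{d−1}/a. -/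
theorem stmt14 (d : ℕ) (hd : 2 ≤ d) (μ : ℝ) (hμ : 0 < μ)
    (r₁ r₂ r₃ h₁ h₂ h₃ : ℝ)
    (hr : 0 < r₂ ∧ r₂ < r₁ ∧ r₁ < r₃)
    (hrsum : r₂ ^ (d - 1) + r₃ ^ (d - 1) ≤ 2 * r₁ ^ (d - 1))
    (hh : h₁ ≤ 0 ∧ h₂ < h₁ ∧ h₃ < h₂)
    (hgap : h₁ - h₂ ≥ h₂ - h₃) :
    ∀ a : ℝ, 0 < a →
      r₁ ^ (d - 1) * (∫ y in h₁..0, Real.exp (a * y)) +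
        r₂ ^ (d - 1) * (∫ y in h₂..h₁, Real.exp (a * y)) +
        r₃ ^ (d - 1) * (∫ y in h₃..h₂, Real.exp (a * y)) ≤ r₁ ^ (d - 1) / a := by
  obtain ⟨hr2, hr21, hr13⟩ := hr
  obtain ⟨hh1, hh21, hh32⟩ := hh
  intro a ha
  have hne : a ≠ 0 := ha.ne'
  have hint : ∀ l u : ℝ, (∫ y in l..u, Real.exp (a * y))
      = a⁻¹ * (Real.exp (a * u) - Real.exp (a * l)) := by
    intro l u
    rw [intervalIntegral.integral_comp_mul_left (fun x => Real.exp x) hne,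
      integral_exp, smul_eq_mul]
  rw [hint, hint, hint]
  set x₁ := Real.exp (a * h₁) with hx1
  set x₂ := Real.exp (a * h₂) with hx2
  set x₃ := Real.exp (a * h₃) with hx3
  have hx3pos : 0 < x₃ := Real.exp_pos _
  have h12 : x₂ < x₁ := Real.exp_lt_exp.2 (by nlinarith)
  have h23 : x₃ < x₂ := Real.exp_lt_exp.2 (by nlinarith)
  have h1le : x₁ ≤ 1 := Real.exp_le_one_iff.2 (by nlinarith)
  have hprod : x₂ ^ 2 ≤ x₁ * x₃ := by
    have : Real.exp (a * h₂) * Real.exp (a * h₂) ≤ Real.exp (a * h₁) * Real.exp (a * h₃) := by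
      rw [← Real.exp_add, ← Real.exp_add]
      exact Real.exp_le_exp.2 (by nlinarith)
    nlinarith [this]
  have hconv : x₂ - x₃ ≤ x₁ - x₂ := by nlinarith [sq_nonneg (x₁ - x₃), sq_nonneg (x₁ + x₃)]
  have hp21 : r₂ ^ (d - 1) ≤ r₁ ^ (d - 1) := pow_le_pow_left₀ hr2.le hr21.le _
  have hp2 : 0 < r₂ ^ (d - 1) := pow_pos hr2 _
  have hp3 : 0 < r₃ ^ (d - 1) := pow_pos (by linarith) _
  rw [div_eq_mul_inv]
  have key : r₁ ^ (d - 1) * (1 - x₁) + r₂ ^ (d - 1) * (x₁ - x₂)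
      + r₃ ^ (d - 1) * (x₂ - x₃) ≤ r₁ ^ (d - 1) := by
    nlinarith [mul_nonneg (sub_nonneg.2 hp21) (by linarith : (0:ℝ) ≤ (x₁ - x₂) - (x₂ - x₃)),
      mul_nonneg (by linarith : (0:ℝ) ≤ 2 * r₁ ^ (d-1) - r₂ ^ (d-1) - r₃ ^ (d-1))
        (by linarith : (0:ℝ) ≤ x₂ - x₃),
      mul_nonneg (pow_pos (hr2.trans hr21) (d-1)).le hx3pos.le]
  have ha' : 0 ≤ a⁻¹ := by positivity
  calc r₁ ^ (d - 1) * (a⁻¹ * (Real.exp (a * 0) - x₁)) + r₂ ^ (d - 1) * (a⁻¹ * (x₁ - x₂))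
        + r₃ ^ (d - 1) * (a⁻¹ * (x₂ - x₃))
      = a⁻¹ * (r₁ ^ (d - 1) * (1 - x₁) + r₂ ^ (d - 1) * (x₁ - x₂)
        + r₃ ^ (d - 1) * (x₂ - x₃)) := by rw [mul_zero, Real.exp_zero]; ring
    _ ≤ a⁻¹ * (r₁ ^ (d - 1)) := by exact mul_le_mul_of_nonneg_left key ha'
    _ = r₁ ^ (d - 1) * a⁻¹ := by ring
end

section
/- For every a > 0, the inequality ∫_{−1}^{0} e^{ay} dy + (1/4)·∫_{−2}^{−1} e^{ay} dy + (9/4)·∫_{−4}^{−2} e^{ay} dy ≤ ∫_{−∞}^{0} e^{ay} dy = 1/a holds. -/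
open MeasureTheory

theorem stmt16 (a : ℝ) (ha : 0 < a) :
    (∫ y in (-1 : ℝ)..0, Real.exp (a * y)) +
        (1 / 4) * (∫ y in (-2 : ℝ)..(-1), Real.exp (a * y)) +
        (9 / 4) * (∫ y in (-4 : ℝ)..(-2), Real.exp (a * y)) ≤
      ∫ y in Set.Iio (0 : ℝ), Real.exp (a * y) ∧
    (∫ y in Set.Iio (0 : ℝ), Real.exp (a * y)) = 1 / a := by
  have hIio : (∫ y in Set.Iio (0 : ℝ), Real.exp (a * y)) = 1 / a := by
    rw [← integral_Iic_eq_integral_Iio]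
    have h1 := integral_comp_neg_Ioi (0 : ℝ) (fun y => Real.exp (a * y))
    rw [neg_zero] at h1
    rw [← h1]
    have h2 : (∫ x in Set.Ioi (0 : ℝ), Real.exp (a * (-x)))
        = ∫ x in Set.Ioi (0 : ℝ), (fun t => Real.exp (-t)) (a * x) := by
      congr 1; ext x; simp [mul_comm, neg_mul, mul_neg]
    have h3 := MeasureTheory.integral_comp_mul_left_Ioi (fun t => Real.exp (-t)) 0 ha
    simp only [mul_zero] at h3
    rw [h2, h3, integral_exp_neg_Ioi, neg_zero, Real.exp_zero, smul_eq_mul, mul_one, one_div]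
  have hint : ∀ c d : ℝ, (∫ y in c..d, Real.exp (a * y))
      = (Real.exp (a * d) - Real.exp (a * c)) / a := by
    intro c d
    rw [intervalIntegral.integral_comp_mul_left (fun x => Real.exp x) ha.ne',
      integral_exp, smul_eq_mul]
    field_simp
  refine ⟨?_, hIio⟩
  rw [hIio, hint, hint, hint]
  set x := Real.exp (-a) with hx
  have hx1 : x < 1 := Real.exp_lt_one_iff.mpr (by linarith)
  have hx0 : 0 < x := Real.exp_pos _
  have e2 : Real.exp (a * (-2)) = x ^ 2 := by
    rw [hx, ← Real.exp_nat_mul]; congr 1; push_cast; ring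
  have e4 : Real.exp (a * (-4)) = x ^ 4 := by
    rw [hx, ← Real.exp_nat_mul]; congr 1; push_cast; ring
  have e1 : Real.exp (a * (-1)) = x := by rw [hx]; ring_nf
  rw [mul_zero, Real.exp_zero, e1, e2, e4]
  have key : 0 ≤ 9 * x ^ 3 - 8 * x + 3 := by
    nlinarith [sq_nonneg (x - 2/3), sq_nonneg (3 * x - 1), sq_nonneg (3 * x - 2),
      mul_pos hx0 hx0, mul_nonneg (sq_nonneg (3 * x - 2)) hx0.le]
  have hnum : (1 - x) + 1 / 4 * (x - x ^ 2) + 9 / 4 * (x ^ 2 - x ^ 4) ≤ 1 := by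
    nlinarith [mul_nonneg hx0.le key]
  calc (1 - x) / a + 1 / 4 * ((x - x ^ 2) / a) + 9 / 4 * ((x ^ 2 - x ^ 4) / a)
      = ((1 - x) + 1 / 4 * (x - x ^ 2) + 9 / 4 * (x ^ 2 - x ^ 4)) / a := by ring
    _ ≤ 1 / a := by gcongr
end
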